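/- The operator Q = (1/2) D x̂ D − (1/3) D³ on F[x] lowers the degree of each polynomial by one, satisfies Qxⁿ = (n²/2) x^{n−1} − (1/3) n(n−1)(n−2) x^{n−3}, and there is no admissible sequence ψ and scalars q_k such that Q = ∂_ψ + Σ_{k≥2} q_k ∂_ψ^k. -/

import Mathlib

open Polynomial

/-- The operator Q = (1/2) D x̂ D − (1/3) D³ on ℚ[x]. -/
noncomputable def Qop : Module.End ℚ (Polynomial ℚ) :=
  (1 / 2 : ℚ) • (Polynomial.derivative ∘ₗ
      LinearMap.mulLeft ℚ (Polynomial.X : Polynomial ℚ) ∘ₗ Polynomial.derivative)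
  - (1 / 3 : ℚ) • (Polynomial.derivative ∘ₗ Polynomial.derivative ∘ₗ
      (Polynomial.derivative : Polynomial ℚ →ₗ[ℚ] Polynomial ℚ))

lemma coeff_Qop (p : Polynomial ℚ) (m : ℕ) :
    (Qop p).coeff m = (1/2) * ((m:ℚ)+1)^2 * p.coeff (m+1)
      - (1/3) * ((m:ℚ)+1) * ((m:ℚ)+2) * ((m:ℚ)+3) * p.coeff (m+3) := by
  simp [Qop, Polynomial.coeff_derivative, coeff_X_mul, -derivative_mul]
  push_cast
  ring

lemma Qop_Xpow (n : ℕ) : Qop (X ^ n : Polynomial ℚ) =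
    ((n ^ 2 : ℚ) / 2) • X ^ (n - 1)
      - ((1 / 3 : ℚ) * n * (n - 1) * (n - 2)) • X ^ (n - 3) := by
  ext m
  simp only [coeff_Qop, coeff_sub, coeff_smul, coeff_X_pow, smul_eq_mul]
  match n with
  | 0 => norm_num
  | 1 =>
    have h1 : (m + 1 = 1) ↔ (m = 0) := by omega
    simp only [h1]
    split_ifs <;>
      first
        | (exfalso; omega)
        | (subst_vars; push_cast; ring)
        | (subst_vars; push_cast; norm_num)
        | (push_cast; ring)
  | 2 =>
    have h1 : (m + 1 = 2) ↔ (m = 1) := by omega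
    simp only [h1]
    split_ifs <;>
      first
        | (exfalso; omega)
        | (subst_vars; push_cast; ring)
        | (subst_vars; push_cast; norm_num)
        | (push_cast; ring)
  | (k+3) =>
    have h1 : (m + 1 = k + 3) ↔ (m = k + 2) := by omega
    have h2 : (m + 3 = k + 3) ↔ (m = k) := by omega
    have h3 : (k + 3 - 1 : ℕ) = k + 2 := by omega
    have h4 : (k + 3 - 3 : ℕ) = k := by omega
    simp only [h1, h2, h3, h4]
    split_ifs <;>
      first
        | (exfalso; omega)
        | (subst_vars; push_cast; ring)
        | (push_cast; ring)


set_option maxHeartbeats 1000000 in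
/-- Q lowers degree by exactly one, Qxⁿ = (n²/2)x^{n−1} − (1/3)n(n−1)(n−2)x^{n−3},
and Q is not of the form ∂_ψ + Σ_{k≥2} q_k ∂_ψᵏ for any admissible ψ. -/
theorem Qop_not_series_in_psi_derivative :
    ((∀ p : Polynomial ℚ, 1 ≤ p.natDegree →
        Qop p ≠ 0 ∧ (Qop p).natDegree = p.natDegree - 1) ∧
      ∀ p : Polynomial ℚ, p.natDegree = 0 → Qop p = 0) ∧
    (∀ n : ℕ, Qop (X ^ n) =
        ((n ^ 2 : ℚ) / 2) • X ^ (n - 1)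
          - ((1 / 3 : ℚ) * n * (n - 1) * (n - 2)) • X ^ (n - 3)) ∧
    ¬ ∃ (nψ q : ℕ → ℚ), nψ 0 = 0 ∧ (∀ n ≥ 1, nψ n ≠ 0) ∧
        ∀ n : ℕ, Qop (X ^ n) =
          ∑ k ∈ Finset.Icc 1 n,
            ((if k = 1 then 1 else q k) * ∏ j ∈ Finset.range k, nψ (n - j)) •
              X ^ (n - k) := by
  refine ⟨⟨?_, ?_⟩, Qop_Xpow, ?_⟩
  · intro p hp
    set n := p.natDegree with hn
    have hpne : p ≠ 0 := fun h => by simp [h] at hn; omega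
    have hc3 : p.coeff (n - 1 + 3) = 0 :=
      coeff_eq_zero_of_natDegree_lt (by omega)
    have hkey : (Qop p).coeff (n - 1) = (1/2) * ((n:ℚ))^2 * p.coeff n := by
      rw [coeff_Qop, hc3, show n - 1 + 1 = n from by omega]
      have : ((n - 1 : ℕ) : ℚ) + 1 = (n : ℚ) := by
        have : ((n - 1 : ℕ) : ℚ) = (n : ℚ) - 1 := by
          push_cast [Nat.cast_sub (by omega : 1 ≤ n)]; ring
        rw [this]; ring
      rw [this]; ring
    have hne : (Qop p).coeff (n - 1) ≠ 0 := by
      rw [hkey]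
      have h1 : p.coeff n ≠ 0 := by
        rw [hn]; exact mt leadingCoeff_eq_zero.mp hpne
      have h2 : (n:ℚ) ≠ 0 := Nat.cast_ne_zero.mpr (by omega)
      exact mul_ne_zero (mul_ne_zero (by norm_num) (pow_ne_zero 2 h2)) h1
    constructor
    · intro h; rw [h] at hne; simp at hne
    · refine le_antisymm ?_ (le_natDegree_of_ne_zero hne)
      rw [natDegree_le_iff_coeff_eq_zero]
      intro m hm
      rw [coeff_Qop, coeff_eq_zero_of_natDegree_lt (by omega),
        coeff_eq_zero_of_natDegree_lt (by omega)]
      ring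
  · intro p hp
    obtain ⟨c, rfl⟩ := natDegree_eq_zero.mp hp
    show Qop (C c) = 0
    simp [Qop]
  · rintro ⟨nψ, q, h0, hne, heq⟩
    have e1 := heq 1
    have e2 := heq 2
    have e3 := heq 3
    have e4 := heq 4
    rw [Qop_Xpow, show Finset.Icc 1 1 = {1} from rfl, Finset.sum_singleton] at e1
    rw [Qop_Xpow, show Finset.Icc 1 2 = {1, 2} from rfl,
      Finset.sum_insert (by decide), Finset.sum_singleton] at e2
    rw [Qop_Xpow, show Finset.Icc 1 3 = {1, 2, 3} from rfl,
      Finset.sum_insert (by decide), Finset.sum_insert (by decide),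
      Finset.sum_singleton] at e3
    rw [Qop_Xpow, show Finset.Icc 1 4 = {1, 2, 3, 4} from rfl,
      Finset.sum_insert (by decide), Finset.sum_insert (by decide),
      Finset.sum_insert (by decide), Finset.sum_singleton] at e4
    have ext : ∀ (j : ℕ) (p r : Polynomial ℚ), p = r → p.coeff j = r.coeff j := by
      intro j p r h; rw [h]
    have c1 : nψ 1 = 1/2 := by
      have h := ext 0 _ _ e1
      simp only [coeff_sub, coeff_add, coeff_smul, coeff_X_pow, smul_eq_mul,
        Finset.prod_range_succ, Finset.prod_range_zero, one_mul] at h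
      norm_num at h
      exact h.symm
    have c2 : nψ 2 = 2 := by
      have h := ext 1 _ _ e2
      simp only [coeff_sub, coeff_add, coeff_smul, coeff_X_pow, smul_eq_mul,
        Finset.prod_range_succ, Finset.prod_range_zero, one_mul] at h
      norm_num at h
      exact h.symm
    have c3 : nψ 3 = 9/2 := by
      have h := ext 2 _ _ e3
      simp only [coeff_sub, coeff_add, coeff_smul, coeff_X_pow, smul_eq_mul,
        Finset.prod_range_succ, Finset.prod_range_zero, one_mul] at h
      norm_num at h
      exact h.symm
    have c4 : nψ 4 = 8 := by
      have h := ext 3 _ _ e4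
      simp only [coeff_sub, coeff_add, coeff_smul, coeff_X_pow, smul_eq_mul,
        Finset.prod_range_succ, Finset.prod_range_zero, one_mul] at h
      norm_num at h
      exact h.symm
    have c3' : q 3 * (nψ 3 * nψ 2 * nψ 1) = -2 := by
      have h := ext 0 _ _ e3
      simp only [coeff_sub, coeff_add, coeff_smul, coeff_X_pow, smul_eq_mul,
        Finset.prod_range_succ, Finset.prod_range_zero, one_mul] at h
      norm_num at h
      exact h.symm
    have c4' : q 3 * (nψ 4 * nψ 3 * nψ 2) = -8 := by
      have h := ext 1 _ _ e4
      simp only [coeff_sub, coeff_add, coeff_smul, coeff_X_pow, smul_eq_mul,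
        Finset.prod_range_succ, Finset.prod_range_zero, one_mul] at h
      norm_num at h
      exact h.symm
    rw [c1, c2, c3] at c3'
    rw [c2, c3, c4] at c4'
    nlinarith [c3', c4']
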